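/- Let a*, a ∈ ℝ^d. Then ⟨a, x⟩ ≤ max(⟨a*, x⟩, 0) holds for every x ∈ ℝ^d if and only if there exists k ∈ ℝ with 0 ≤ k ≤ 1 such that a = k·a*. -/

import Mathlib

theorem stmt7 (d : ℕ) (hd : 1 ≤ d) (astar a : Fin d → ℝ) :
    (∀ x : Fin d → ℝ, ∑ i, a i * x i ≤ max (∑ i, astar i * x i) 0) ↔
      ∃ k : ℝ, 0 ≤ k ∧ k ≤ 1 ∧ a = k • astar := by
  constructor
  · intro h
    set B := ∑ i, astar i * astar i with hB
    set C := ∑ i, a i * astar i with hC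
    have hBnn : 0 ≤ B := Finset.sum_nonneg fun i _ => mul_self_nonneg _
    have hCB : C ≤ B := by
      have h1 := h astar
      rwa [max_eq_left hBnn] at h1
    have hC0 : 0 ≤ C := by
      have h1 := h (fun i => -astar i)
      simp only [mul_neg, Finset.sum_neg_distrib, ← hB, ← hC] at h1
      have : max (-B) 0 = 0 := max_eq_right (neg_nonpos.mpr hBnn)
      rw [this] at h1
      linarith
    rcases eq_or_lt_of_le hBnn with hB0 | hBpos
    · refine ⟨0, le_refl 0, zero_le_one, ?_⟩
      have hast : ∀ i, astar i = 0 := by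
        intro i
        have := (Finset.sum_eq_zero_iff_of_nonneg
          (fun i _ => mul_self_nonneg (astar i))).mp hB0.symm i (Finset.mem_univ i)
        nlinarith [this]
      have h2 := h a
      have hz : (∑ i, astar i * a i) = 0 :=
        Finset.sum_eq_zero fun i _ => by rw [hast i]; ring
      rw [hz, max_self] at h2
      have hsum0 : (∑ i, a i * a i) = 0 :=
        le_antisymm h2 (Finset.sum_nonneg fun i _ => mul_self_nonneg _)
      funext i
      have := (Finset.sum_eq_zero_iff_of_nonneg
        (fun i _ => mul_self_nonneg (a i))).mp hsum0 i (Finset.mem_univ i)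
      have : a i = 0 := by nlinarith [this]
      simp [this]
    · set k := C / B with hk
      refine ⟨k, div_nonneg hC0 hBnn, by rw [hk, div_le_one hBpos]; exact hCB, ?_⟩
      set x : Fin d → ℝ := fun i => a i - k * astar i with hx
      have hax : (∑ i, astar i * x i) = 0 := by
        have : (∑ i, astar i * x i)
            = (∑ i, astar i * a i) - k * ∑ i, astar i * astar i := by
          rw [Finset.mul_sum, ← Finset.sum_sub_distrib]
          exact Finset.sum_congr rfl fun i _ => by simp [hx]; ring
        rw [this]
        have hac : (∑ i, astar i * a i) = C := by
          rw [hC]; exact Finset.sum_congr rfl fun i _ => mul_comm _ _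
        rw [hac, ← hB, hk]
        field_simp
        ring
      have h1 : (∑ i, a i * x i) ≤ 0 := by
        have h1 := h x
        rwa [hax, max_self] at h1
      have h2 : (∑ i, x i * x i) ≤ 0 := by
        have : (∑ i, x i * x i)
            = (∑ i, a i * x i) - k * ∑ i, astar i * x i := by
          rw [Finset.mul_sum, ← Finset.sum_sub_distrib]
          exact Finset.sum_congr rfl fun i _ => by simp [hx]; ring
        rw [this, hax]
        linarith
      have hsum0 : (∑ i, x i * x i) = 0 :=
        le_antisymm h2 (Finset.sum_nonneg fun i _ => mul_self_nonneg _)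
      funext i
      have hxi := (Finset.sum_eq_zero_iff_of_nonneg
        (fun i _ => mul_self_nonneg (x i))).mp hsum0 i (Finset.mem_univ i)
      have hxi0 : x i = 0 := by nlinarith [hxi]
      have : a i - k * astar i = 0 := hxi0
      simp only [Pi.smul_apply, smul_eq_mul]
      linarith
  · rintro ⟨k, hk0, hk1, rfl⟩
    intro x
    have hsum : (∑ i, (k • astar) i * x i) = k * ∑ i, astar i * x i := by
      rw [Finset.mul_sum]
      exact Finset.sum_congr rfl fun i _ => by simp [mul_assoc]
    rw [hsum]
    rcases le_or_gt 0 (∑ i, astar i * x i) with hs | hs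
    · calc k * ∑ i, astar i * x i ≤ 1 * ∑ i, astar i * x i := by
            exact mul_le_mul_of_nonneg_right hk1 hs
        _ = ∑ i, astar i * x i := one_mul _
        _ ≤ max (∑ i, astar i * x i) 0 := le_max_left _ _
    · calc k * ∑ i, astar i * x i ≤ 0 := mul_nonpos_of_nonneg_of_nonpos hk0 hs.le
        _ ≤ max (∑ i, astar i * x i) 0 := le_max_right _ _
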